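/- For every positive integer n, T(J_n) is odd, i.e. ν_2(T(J_n)) = 0, where J_n is the n-th Jacobsthal number. -/

import Mathlib

open Nat Finset

/-- The ASM counting sequence `T(n) = ∏_{j=0}^{n-1} (3j+1)!/(n+j)!`. -/
def T (n : ℕ) : ℚ := ∏ j ∈ Finset.range n, ((3 * j + 1)! : ℚ) / ((n + j)! : ℚ)

/-- The Jacobsthal numbers: `J 0 = J 1 = 1`, `J (n+2) = J (n+1) + 2 * J n`. -/
def J : ℕ → ℕ
  | 0 => 1
  | 1 => 1
  | (n + 2) => J (n + 1) + 2 * J n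

/-- Sum of the base-`p` digits of `n`. -/
def S (p n : ℕ) : ℕ := (Nat.digits p n).sum

/-- The generalized sequence `T_p(n) = ∏_{j=0}^{n-1} (pj+1)!/(n+j)!`. -/
def Tp (p n : ℕ) : ℚ := ∏ j ∈ Finset.range n, ((p * j + 1)! : ℚ) / ((n + j)! : ℚ)


lemma s_even (n : ℕ) : S 2 (2 * n) = S 2 n := by
  rcases Nat.eq_zero_or_pos n with h | h
  · simp [h, S]
  · unfold S
    rw [Nat.digits_def' (by norm_num : 1 < 2) (by omega)]
    simp [Nat.mul_div_cancel_left, Nat.mul_mod_right]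

lemma s_odd (n : ℕ) : S 2 (2 * n + 1) = S 2 n + 1 := by
  unfold S
  rw [Nat.digits_def' (by norm_num : 1 < 2) (by omega)]
  have h1 : (2 * n + 1) % 2 = 1 := by omega
  have h2 : (2 * n + 1) / 2 = n := by omega
  rw [h1, h2]; simp [Nat.add_comm]

def g (N : ℕ) : ℕ := ∑ j ∈ range N, S 2 j
def a (N : ℕ) : ℕ := ∑ i ∈ range N, S 2 (3 * i)
def b (N : ℕ) : ℕ := ∑ i ∈ range N, S 2 (3 * i + 1)
def c (N : ℕ) : ℕ := ∑ i ∈ range N, S 2 (3 * i + 2)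

lemma g_succ (N : ℕ) : g (N + 1) = g N + S 2 N := Finset.sum_range_succ _ _
lemma a_succ (N : ℕ) : a (N + 1) = a N + S 2 (3 * N) := Finset.sum_range_succ _ _
lemma b_succ (N : ℕ) : b (N + 1) = b N + S 2 (3 * N + 1) := Finset.sum_range_succ _ _
lemma c_succ (N : ℕ) : c (N + 1) = c N + S 2 (3 * N + 2) := Finset.sum_range_succ _ _

lemma g_two_mul (N : ℕ) : g (2 * N) = 2 * g N + N := by
  induction N with
  | zero => simp [g]
  | succ n ih =>
    have e : 2 * (n + 1) = (2 * n + 1) + 1 := by ring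
    rw [e, g_succ, g_succ, ih, g_succ]
    have h1 : S 2 (2 * n) = S 2 n := s_even n
    have h2 : S 2 (2 * n + 1) = S 2 n + 1 := s_odd n
    omega

lemma a_even (N : ℕ) : a (2 * N) = a N + b N + N := by
  induction N with
  | zero => simp [a, b]
  | succ n ih =>
    have e : 2 * (n + 1) = (2 * n + 1) + 1 := by ring
    rw [e, a_succ, a_succ, ih, a_succ, b_succ]
    have h1 : S 2 (3 * (2 * n)) = S 2 (3 * n) := by
      rw [show 3 * (2 * n) = 2 * (3 * n) by ring, s_even]
    have h2 : S 2 (3 * (2 * n + 1)) = S 2 (3 * n + 1) + 1 := by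
      rw [show 3 * (2 * n + 1) = 2 * (3 * n + 1) + 1 by ring, s_odd]
    omega

lemma b_even (N : ℕ) : b (2 * N) = a N + c N + N := by
  induction N with
  | zero => simp [a, b, c]
  | succ n ih =>
    have e : 2 * (n + 1) = (2 * n + 1) + 1 := by ring
    rw [e, b_succ, b_succ, ih, a_succ, c_succ]
    have h1 : S 2 (3 * (2 * n) + 1) = S 2 (3 * n) + 1 := by
      rw [show 3 * (2 * n) + 1 = 2 * (3 * n) + 1 by ring, s_odd]
    have h2 : S 2 (3 * (2 * n + 1) + 1) = S 2 (3 * n + 2) := by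
      rw [show 3 * (2 * n + 1) + 1 = 2 * (3 * n + 2) by ring, s_even]
    omega

lemma c_even (N : ℕ) : c (2 * N) = b N + c N + N := by
  induction N with
  | zero => simp [b, c]
  | succ n ih =>
    have e : 2 * (n + 1) = (2 * n + 1) + 1 := by ring
    rw [e, c_succ, c_succ, ih, b_succ, c_succ]
    have h1 : S 2 (3 * (2 * n) + 2) = S 2 (3 * n + 1) := by
      rw [show 3 * (2 * n) + 2 = 2 * (3 * n + 1) by ring, s_even]
    have h2 : S 2 (3 * (2 * n + 1) + 2) = S 2 (3 * n + 2) + 1 := by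
      rw [show 3 * (2 * n + 1) + 2 = 2 * (3 * n + 2) + 1 by ring, s_odd]
    omega

lemma a_odd (N : ℕ) : a (2 * N + 1) = a (N + 1) + b N + N := by
  induction N with
  | zero => simp [a, b, S]
  | succ n ih =>
    have e : 2 * (n + 1) + 1 = (2 * n + 1) + 1 + 1 := by ring
    rw [e, a_succ, a_succ, ih, b_succ]
    have hp : a (n + 1 + 1) = a (n + 1) + S 2 (3 * (n + 1)) := a_succ (n + 1)
    have h1 : S 2 (3 * (2 * n + 1)) = S 2 (3 * n + 1) + 1 := by
      rw [show 3 * (2 * n + 1) = 2 * (3 * n + 1) + 1 by ring, s_odd]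
    have h2 : S 2 (3 * (2 * n + 2)) = S 2 (3 * n + 3) := by
      rw [show 3 * (2 * n + 2) = 2 * (3 * n + 3) by ring, s_even]
    have h3 : S 2 (3 * (n + 1)) = S 2 (3 * n + 3) := by
      rw [show 3 * (n + 1) = 3 * n + 3 by ring]
    omega

lemma b_odd (N : ℕ) : b (2 * N + 1) = c N + a (N + 1) + N + 1 := by
  induction N with
  | zero => simp [a, b, c, S]
  | succ n ih =>
    have e : 2 * (n + 1) + 1 = (2 * n + 1) + 1 + 1 := by ring
    rw [e, b_succ, b_succ, ih, c_succ]
    have hp : a (n + 1 + 1) = a (n + 1) + S 2 (3 * (n + 1)) := a_succ (n + 1)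
    have h1 : S 2 (3 * (2 * n + 1) + 1) = S 2 (3 * n + 2) := by
      rw [show 3 * (2 * n + 1) + 1 = 2 * (3 * n + 2) by ring, s_even]
    have h2 : S 2 (3 * (2 * n + 2) + 1) = S 2 (3 * n + 3) + 1 := by
      rw [show 3 * (2 * n + 2) + 1 = 2 * (3 * n + 3) + 1 by ring, s_odd]
    have h3 : S 2 (3 * (n + 1)) = S 2 (3 * n + 3) := by
      rw [show 3 * (n + 1) = 3 * n + 3 by ring]
    omega

lemma c_odd (N : ℕ) : c (2 * N + 1) = b (N + 1) + c N + N := by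
  induction N with
  | zero => simp [b, c, S]
  | succ n ih =>
    have e : 2 * (n + 1) + 1 = (2 * n + 1) + 1 + 1 := by ring
    rw [e, c_succ, c_succ, ih, c_succ]
    have hp : b (n + 1 + 1) = b (n + 1) + S 2 (3 * (n + 1) + 1) := b_succ (n + 1)
    have h1 : S 2 (3 * (2 * n + 1) + 2) = S 2 (3 * n + 2) + 1 := by
      rw [show 3 * (2 * n + 1) + 2 = 2 * (3 * n + 2) + 1 by ring, s_odd]
    have h2 : S 2 (3 * (2 * n + 2) + 2) = S 2 (3 * n + 4) := by
      rw [show 3 * (2 * n + 2) + 2 = 2 * (3 * n + 4) by ring, s_even]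
    have h3 : S 2 (3 * (n + 1) + 1) = S 2 (3 * n + 4) := by
      rw [show 3 * (n + 1) + 1 = 3 * n + 4 by ring]
    omega

/-- `Xf k = (4^k - 1)/3`, the odd-indexed Jacobsthal numbers. -/
def Xf : ℕ → ℕ
  | 0 => 0
  | k + 1 => 4 * Xf k + 1

lemma Xf_succ (k : ℕ) : Xf (k + 1) = 4 * Xf k + 1 := rfl

lemma s_four_mul_add_one (n : ℕ) : S 2 (4 * n + 1) = S 2 n + 1 := by
  rw [show 4 * n + 1 = 2 * (2 * n) + 1 by ring, s_odd, s_even]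

lemma s_Xf (k : ℕ) : S 2 (Xf k) = k := by
  induction k with
  | zero => simp [Xf, S]
  | succ n ih => rw [Xf, s_four_mul_add_one, ih]

lemma s_three_Xf (k : ℕ) : S 2 (3 * Xf k) = 2 * k := by
  induction k with
  | zero => simp [Xf, S]
  | succ n ih =>
    rw [Xf, show 3 * (4 * Xf n + 1) = 2 * (2 * (3 * Xf n) + 1) + 1 by ring,
      s_odd, s_odd]
    omega

/-- The main invariant, at the odd-indexed Jacobsthal numbers. -/
lemma inv (k : ℕ) :
    a (Xf k) + S 2 (Xf k) + g (Xf k) = g (2 * Xf k) ∧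
    b (Xf k) + g (Xf k) = g (2 * Xf k) ∧
    c (Xf k) + g (Xf k) = g (2 * Xf k) := by
  induction k with
  | zero => simp [Xf, a, b, c, g, S]
  | succ k ih =>
    obtain ⟨ha, hb, hc⟩ := ih
    have s1 : S 2 (3 * Xf k) = 2 * S 2 (Xf k) := by rw [s_three_Xf, s_Xf]
    rw [Xf_succ]
    generalize Xf k = N at ha hb hc s1 ⊢
    rw [show 4 * N + 1 = 2 * (2 * N) + 1 by ring]
    have r1 : a (2 * (2 * N) + 1) = a (2 * N + 1) + b (2 * N) + 2 * N := a_odd (2 * N)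
    have r2 : b (2 * (2 * N) + 1) = c (2 * N) + a (2 * N + 1) + 2 * N + 1 := b_odd (2 * N)
    have r3 : c (2 * (2 * N) + 1) = b (2 * N + 1) + c (2 * N) + 2 * N := c_odd (2 * N)
    have r4 : a (2 * N + 1) = a (N + 1) + b N + N := a_odd N
    have r5 : b (2 * N + 1) = c N + a (N + 1) + N + 1 := b_odd N
    have r6 : a (2 * N) = a N + b N + N := a_even N
    have r7 : b (2 * N) = a N + c N + N := b_even N
    have r8 : c (2 * N) = b N + c N + N := c_even N
    have r9 : a (N + 1) = a N + S 2 (3 * N) := a_succ N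
    have g1 : g (2 * N) = 2 * g N + N := g_two_mul N
    have g2 : g (2 * (2 * N)) = 2 * g (2 * N) + 2 * N := g_two_mul (2 * N)
    have g3 : g (2 * (2 * N) + 1) = g (2 * (2 * N)) + S 2 (2 * (2 * N)) := g_succ _
    have g4 : g (2 * (2 * (2 * N) + 1)) = 2 * g (2 * (2 * N) + 1) + (2 * (2 * N) + 1) :=
      g_two_mul (2 * (2 * N) + 1)
    have s2 : S 2 (2 * (2 * N)) = S 2 N := by rw [s_even, s_even]
    have s3 : S 2 (2 * (2 * N) + 1) = S 2 N + 1 := by rw [s_odd, s_even]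
    omega

/-- The invariant at the even-indexed Jacobsthal numbers `2*Xf k + 1`. -/
lemma b_inv_odd (k : ℕ) :
    b (2 * Xf k + 1) + g (2 * Xf k + 1) = g (2 * (2 * Xf k + 1)) := by
  obtain ⟨ha, hb, hc⟩ := inv k
  have s1 : S 2 (3 * Xf k) = 2 * S 2 (Xf k) := by rw [s_three_Xf, s_Xf]
  generalize Xf k = N at ha hb hc s1 ⊢
  have r5 : b (2 * N + 1) = c N + a (N + 1) + N + 1 := b_odd N
  have r9 : a (N + 1) = a N + S 2 (3 * N) := a_succ N
  have g1 : g (2 * N) = 2 * g N + N := g_two_mul N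
  have g3 : g (2 * N + 1) = g (2 * N) + S 2 (2 * N) := g_succ _
  have g4 : g (2 * (2 * N + 1)) = 2 * g (2 * N + 1) + (2 * N + 1) := g_two_mul (2 * N + 1)
  have s2 : S 2 (2 * N) = S 2 N := s_even N
  omega

lemma J_struct (k : ℕ) : J (2 * k + 1) = Xf (k + 1) ∧ J (2 * k + 2) = 2 * Xf (k + 1) + 1 := by
  induction k with
  | zero => constructor <;> rfl
  | succ k ih =>
    obtain ⟨h1, h2⟩ := ih
    have hL : J (2 * (k + 1) + 1) = Xf (k + 1 + 1) := by
      rw [show 2 * (k + 1) + 1 = (2 * k + 1) + 2 by ring, J,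
        show 2 * k + 1 + 1 = 2 * k + 2 by ring, h2, h1, Xf_succ (k + 1)]
      omega
    refine ⟨hL, ?_⟩
    rw [show 2 * (k + 1) + 2 = (2 * k + 2) + 2 by ring, J,
      show 2 * k + 2 + 1 = 2 * (k + 1) + 1 by ring, hL, h2, Xf_succ (k + 1)]
    omega

/-- Key combinatorial identity at Jacobsthal numbers. -/
lemma key (n : ℕ) (hn : 0 < n) : b (J n) + g (J n) = g (2 * J n) := by
  rcases Nat.even_or_odd n with h | h
  · obtain ⟨m, hm⟩ : ∃ m, n = 2 * m + 2 := by
      rcases h with ⟨r, hr⟩; exact ⟨r - 1, by omega⟩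
    rw [hm, (J_struct m).2]
    exact b_inv_odd (m + 1)
  · obtain ⟨m, hm⟩ : ∃ m, n = 2 * m + 1 := by
      rcases h with ⟨r, hr⟩; exact ⟨r, by omega⟩
    rw [hm, (J_struct m).1]
    exact (inv (m + 1)).2.1

lemma L_eq (N : ℕ) : g N + ∑ j ∈ range N, S 2 (N + j) = g (2 * N) := by
  rw [two_mul, g, g, ← Finset.sum_range_add]

lemma legendre (m : ℕ) : padicValNat 2 (m !) = m - S 2 m := by
  have h := sub_one_mul_padicValNat_factorial (p := 2) m
  simpa [S] using h

lemma legendre_cast (m : ℕ) :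
    (padicValNat 2 (m !) : ℤ) = (m : ℤ) - (S 2 m : ℤ) := by
  rw [legendre]
  have : S 2 m ≤ m := Nat.digit_sum_le 2 m
  omega

lemma valrat_prod (n : ℕ) (f : ℕ → ℚ) (hf : ∀ i, f i ≠ 0) :
    padicValRat 2 (∏ i ∈ range n, f i) = ∑ i ∈ range n, padicValRat 2 (f i) := by
  induction n with
  | zero => simp
  | succ m ih =>
    rw [Finset.prod_range_succ, padicValRat.mul
      (Finset.prod_ne_zero_iff.mpr fun i _ => hf i) (hf m), ih, Finset.sum_range_succ]

lemma val_T (N : ℕ)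
    (h : ∑ j ∈ range N, S 2 (N + j) = ∑ j ∈ range N, S 2 (3 * j + 1)) :
    padicValRat 2 (T N) = 0 := by
  have hfac : ∀ m : ℕ, ((m ! : ℕ) : ℚ) ≠ 0 := fun m =>
    Nat.cast_ne_zero.mpr (factorial_ne_zero m)
  have hterm : ∀ j : ℕ, ((3 * j + 1)! : ℚ) / ((N + j)! : ℚ) ≠ 0 := fun j =>
    div_ne_zero (hfac _) (hfac _)
  rw [T, valrat_prod _ _ hterm]
  have hcong : ∀ j ∈ range N,
      padicValRat 2 (((3 * j + 1)! : ℚ) / ((N + j)! : ℚ)) =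
        (((3 * j + 1 : ℕ) : ℤ) - (S 2 (3 * j + 1) : ℤ)) -
          (((N + j : ℕ) : ℤ) - (S 2 (N + j) : ℤ)) := by
    intro j _
    rw [padicValRat.div (hfac _) (hfac _), padicValRat.of_nat, padicValRat.of_nat,
      legendre_cast, legendre_cast]
  rw [Finset.sum_congr rfl hcong]
  rw [Finset.sum_sub_distrib, Finset.sum_sub_distrib, Finset.sum_sub_distrib]
  have e2 : ∑ j ∈ range N, ((S 2 (3 * j + 1) : ℤ)) = ∑ j ∈ range N, ((S 2 (N + j) : ℤ)) := by
    have := congrArg (Nat.cast (R := ℤ)) h.symm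
    push_cast at this ⊢
    exact this
  have e1 : ∑ j ∈ range N, (((3 * j + 1 : ℕ) : ℤ)) = ∑ j ∈ range N, (((N + j : ℕ) : ℤ)) := by
    have hnat : ∑ j ∈ range N, (3 * j + 1) = ∑ j ∈ range N, (N + j) := by
      have gauss : (∑ j ∈ range N, j) * 2 = N * (N - 1) := Finset.sum_range_id_mul_two N
      rw [Finset.sum_add_distrib, Finset.sum_add_distrib, Finset.sum_const, card_range,
        smul_eq_mul, ← Finset.mul_sum]
      cases N with
      | zero => simp
      | succ M =>
        have h1 : (M + 1) * (M + 1 - 1) = (M + 1) * M := rfl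
        have h2 : (M + 1) * (M + 1) = (M + 1) * M + (M + 1) := by ring
        have hc : ∑ _x ∈ range (M + 1), (M + 1) = (M + 1) * (M + 1) := by
          rw [Finset.sum_const, card_range, smul_eq_mul]
        omega
    have := congrArg (Nat.cast (R := ℤ)) hnat
    push_cast at this ⊢
    exact this
  rw [e1, e2]
  ring


theorem stmt9 (n : ℕ) (hn : 0 < n) :
    padicValRat 2 (T (J n)) = 0 := by
  apply val_T
  have h1 := key n hn
  have h2 := L_eq (J n)
  have h3 : b (J n) = ∑ j ∈ range (J n), S 2 (3 * j + 1) := rfl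
  omega
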